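/- (Stevanović) Let G and H be simple graphs on n vertices. If c_k(G) ≤ c_k(H) for all 0 ≤ k ≤ n, then LEL(G) ≤ LEL(H). If moreover c_k(G) < c_k(H) for some k, then LEL(G) < LEL(H). -/

import Mathlib

open SimpleGraph Matrix

section Analysis

open MeasureTheory Set Filter Real

/-- Auxiliary antiderivative for the key integral. -/
noncomputable def stevAux (a t : ℝ) : ℝ :=
  t * (Real.log (t^2 + a) - 2 * Real.log t) + 2 * Real.sqrt a * Real.arctan (t / Real.sqrt a)

lemma stev_integrand_nonneg (a : ℝ) (ha : 0 ≤ a) {t : ℝ} (ht : 0 < t) :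
    0 ≤ Real.log (t^2 + a) - 2 * Real.log t := by
  have h1 : Real.log (t^2) ≤ Real.log (t^2 + a) :=
    Real.log_le_log (by positivity) (by linarith)
  rw [Real.log_pow] at h1
  push_cast at h1
  linarith

lemma stev_integrand_le (a : ℝ) (ha : 0 ≤ a) {t : ℝ} (ht : 0 < t) :
    Real.log (t^2 + a) - 2 * Real.log t ≤ a / t^2 := by
  have ht2 : (0:ℝ) < t^2 := by positivity
  have h : Real.log (t^2 + a) - 2 * Real.log t = Real.log ((t^2+a)/t^2) := by
    rw [Real.log_div (by positivity) (by positivity), Real.log_pow]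
    push_cast; ring
  rw [h]
  have := Real.log_le_sub_one_of_pos (show (0:ℝ) < (t^2+a)/t^2 by positivity)
  have h2 : (t^2+a)/t^2 - 1 = a / t^2 := by field_simp; ring
  linarith [this, h2.le]

lemma stev_tend_top (a : ℝ) (ha : 0 ≤ a) :
    Tendsto (fun t : ℝ => t * (Real.log (t^2 + a) - 2 * Real.log t)) atTop (nhds 0) := by
  apply squeeze_zero' (g := fun t : ℝ => a / t)
  · filter_upwards [eventually_gt_atTop (0:ℝ)] with t ht
    exact mul_nonneg ht.le (stev_integrand_nonneg a ha ht)
  · filter_upwards [eventually_gt_atTop (0:ℝ)] with t ht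
    have := stev_integrand_le a ha ht
    calc t * (Real.log (t^2 + a) - 2 * Real.log t) ≤ t * (a / t^2) :=
          mul_le_mul_of_nonneg_left this ht.le
      _ = a / t := by field_simp
  · exact tendsto_const_nhds.div_atTop tendsto_id

lemma stevAux_tendsto_atTop (a : ℝ) (ha : 0 < a) :
    Tendsto (stevAux a) atTop (nhds (Real.pi * Real.sqrt a)) := by
  have h1 := stev_tend_top a ha.le
  have hsa : (0:ℝ) < Real.sqrt a := Real.sqrt_pos.2 ha
  have h2 : Tendsto (fun t : ℝ => 2 * Real.sqrt a * Real.arctan (t / Real.sqrt a)) atTop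
      (nhds (2 * Real.sqrt a * (Real.pi / 2))) := by
    apply Tendsto.const_mul
    have hdiv : Tendsto (fun t : ℝ => t / Real.sqrt a) atTop atTop :=
      tendsto_id.atTop_div_const hsa
    exact (Real.tendsto_arctan_atTop.mono_right nhdsWithin_le_nhds).comp hdiv
  have h3 := h1.add h2
  have : (0:ℝ) + 2 * Real.sqrt a * (Real.pi / 2) = Real.pi * Real.sqrt a := by ring
  rw [this] at h3
  exact h3

lemma stevAux_cont_at_zero (a : ℝ) (ha : 0 < a) :
    ContinuousWithinAt (stevAux a) (Ici 0) 0 := by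
  rw [← Set.Ioi_insert, continuousWithinAt_insert_self]
  unfold ContinuousWithinAt
  have hFa0 : stevAux a 0 = 0 := by simp [stevAux]
  rw [hFa0]
  have h1 : Tendsto (fun t : ℝ => t * Real.log (t^2 + a)) (nhdsWithin 0 (Ioi 0)) (nhds 0) := by
    have hc : ContinuousAt (fun t : ℝ => t * Real.log (t^2 + a)) 0 := by
      apply ContinuousAt.mul continuousAt_id
      exact (Real.continuousAt_log (by simpa using ha.ne')).comp (by fun_prop)
    have := hc.tendsto.mono_left (nhdsWithin_le_nhds (s := Ioi (0:ℝ)))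
    simpa using this
  have h2 : Tendsto (fun t : ℝ => t * Real.log t) (nhdsWithin 0 (Ioi 0)) (nhds 0) := by
    have := tendsto_log_mul_rpow_nhdsGT_zero (r := 1) one_pos
    simp only [Real.rpow_one] at this
    simpa [mul_comm] using this
  have h3 : Tendsto (fun t : ℝ => 2 * Real.sqrt a * Real.arctan (t / Real.sqrt a))
      (nhdsWithin 0 (Ioi 0)) (nhds 0) := by
    have hc : ContinuousAt (fun t : ℝ => 2 * Real.sqrt a * Real.arctan (t / Real.sqrt a)) 0 :=
      (continuous_const.mul (Real.continuous_arctan.comp (continuous_id.div_const _))).continuousAt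
    have := hc.tendsto.mono_left (nhdsWithin_le_nhds (s := Ioi (0:ℝ)))
    simpa using this
  have h4 := (h1.sub (h2.const_mul 2)).add h3
  norm_num at h4
  apply Tendsto.congr _ h4
  intro t
  simp only [stevAux]
  ring

lemma stevAux_hasDeriv (a : ℝ) (ha : 0 < a) {t : ℝ} (ht : 0 < t) :
    HasDerivAt (stevAux a) (Real.log (t^2 + a) - 2 * Real.log t) t := by
  have ht2a : (0:ℝ) < t^2 + a := by positivity
  have hsa : (0:ℝ) < Real.sqrt a := Real.sqrt_pos.2 ha
  have hsq : Real.sqrt a ^ 2 = a := Real.sq_sqrt ha.le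
  have hlog1 : HasDerivAt (fun t : ℝ => Real.log (t^2 + a)) ((t^2+a)⁻¹ * (2*t)) t := by
    have hp : HasDerivAt (fun t : ℝ => t^2 + a) (2*t) t := by
      simpa using ((hasDerivAt_pow 2 t).add_const a)
    exact (Real.hasDerivAt_log ht2a.ne').comp t hp
  have hlog2 : HasDerivAt (fun t : ℝ => 2 * Real.log t) (2 * t⁻¹) t :=
    (Real.hasDerivAt_log ht.ne').const_mul 2
  have hd1 : HasDerivAt (fun t : ℝ => t * (Real.log (t^2 + a) - 2 * Real.log t))
      (1 * (Real.log (t^2 + a) - 2 * Real.log t) + t * ((t^2+a)⁻¹ * (2*t) - 2 * t⁻¹)) t :=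
    (hasDerivAt_id t).mul (hlog1.sub hlog2)
  have hdiv : HasDerivAt (fun t : ℝ => t / Real.sqrt a) (1 / Real.sqrt a) t := by
    simpa [div_eq_mul_inv, one_div] using (hasDerivAt_id t).mul_const (Real.sqrt a)⁻¹
  have harc := ((Real.hasDerivAt_arctan (t / Real.sqrt a)).comp t hdiv).const_mul
      (2 * Real.sqrt a)
  have h5 := hd1.add harc
  refine h5.congr_deriv ?_
  have htsq : 1 + (t / Real.sqrt a)^2 = (t^2 + a) / a := by
    rw [div_pow, hsq]; field_simp; ring
  rw [htsq]
  field_simp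
  ring

lemma stev_key_integral (a : ℝ) (ha : 0 ≤ a) :
    IntegrableOn (fun t => Real.log (t^2 + a) - 2 * Real.log t) (Ioi (0:ℝ)) ∧
      ∫ t in Ioi (0:ℝ), (Real.log (t^2 + a) - 2 * Real.log t) = Real.pi * Real.sqrt a := by
  rcases eq_or_lt_of_le ha with h0 | ha'
  · have hfun : (fun t : ℝ => Real.log (t^2 + a) - 2 * Real.log t) = fun _ => 0 := by
      funext t
      rw [← h0, add_zero, Real.log_pow]
      push_cast; ring
    rw [hfun, ← h0]
    simp
  · have hderiv : ∀ x ∈ Ioi (0:ℝ), HasDerivAt (stevAux a)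
        (Real.log (x^2 + a) - 2 * Real.log x) x := fun x hx => stevAux_hasDeriv a ha' hx
    have hnn : ∀ x ∈ Ioi (0:ℝ), 0 ≤ Real.log (x^2 + a) - 2 * Real.log x :=
      fun x hx => stev_integrand_nonneg a ha hx
    refine ⟨integrableOn_Ioi_deriv_of_nonneg (stevAux_cont_at_zero a ha') hderiv hnn
      (stevAux_tendsto_atTop a ha'), ?_⟩
    rw [integral_Ioi_of_hasDerivAt_of_nonneg (stevAux_cont_at_zero a ha') hderiv hnn
      (stevAux_tendsto_atTop a ha')]
    simp [stevAux]

end Analysis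

section Algebra

open Polynomial Finset

variable {V : Type*} [Fintype V] [DecidableEq V]

lemma stev_charpoly_conj_eq (A U : Matrix V V ℝ) (hU : U ∈ Matrix.unitaryGroup V ℝ) :
    (star U * A * U).charpoly = A.charpoly := by
  have hU2 : star U * U = 1 := (Matrix.mem_unitaryGroup_iff').mp hU
  set P := (C : ℝ →+* ℝ[X]).mapMatrix (star U)
  set Q := (C : ℝ →+* ℝ[X]).mapMatrix U
  have hPQ : P * Q = 1 := by
    rw [← RingHom.map_mul, show star U * U = 1 from hU2, RingHom.map_one]
  have hcm : charmatrix (star U * A * U) = P * charmatrix A * Q := by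
    unfold charmatrix
    rw [RingHom.map_mul, RingHom.map_mul]
    have hscalar : P * Matrix.scalar V (X : ℝ[X]) * Q = Matrix.scalar V (X : ℝ[X]) := by
      have hc : Commute (Matrix.scalar V (X : ℝ[X])) P :=
        Matrix.scalar_commute _ (fun r' => Commute.all _ _) _
      rw [← hc.eq, mul_assoc, hPQ, mul_one]
    rw [mul_sub, sub_mul, hscalar]
  unfold Matrix.charpoly
  rw [hcm, Matrix.det_mul, Matrix.det_mul, mul_comm, ← mul_assoc, mul_comm (Q.det) (P.det),
    ← Matrix.det_mul, hPQ, Matrix.det_one, one_mul]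

lemma stev_charpoly_diagonal_eq (d : V → ℝ) :
    (Matrix.diagonal d).charpoly = ∏ i, (X - C (d i)) := by
  have h : charmatrix (Matrix.diagonal d) = Matrix.diagonal (fun i => X - C (d i)) := by
    ext i j
    by_cases hij : i = j
    · subst hij; simp [charmatrix_apply_eq, Matrix.diagonal]
    · simp [charmatrix_apply_ne _ _ _ hij, Matrix.diagonal_apply_ne _ hij,
        Matrix.diagonal_apply_ne' _ (Ne.symm hij)]
  rw [Matrix.charpoly, h, Matrix.det_diagonal]

lemma stev_charpoly_hermitian_eq (A : Matrix V V ℝ) (hA : A.IsHermitian) :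
    A.charpoly = ∏ i, (X - C (hA.eigenvalues i)) := by
  have hdiag := hA.conjStarAlgAut_star_eigenvectorUnitary
  rw [Unitary.conjStarAlgAut_star_apply] at hdiag
  rw [RCLike.ofReal_real_eq_id] at hdiag
  simp only [Function.id_comp] at hdiag
  rw [← stev_charpoly_conj_eq A _ (hA.eigenvectorUnitary).2, hdiag, stev_charpoly_diagonal_eq]

lemma stev_lapMatrix_map_cast (G : SimpleGraph V) [DecidableRel G.Adj] :
    (G.lapMatrix ℤ).map (Int.cast : ℤ → ℝ) = G.lapMatrix ℝ := by
  ext i j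
  simp only [SimpleGraph.lapMatrix, SimpleGraph.degMatrix, Matrix.map_apply, Matrix.sub_apply,
    Matrix.diagonal, SimpleGraph.adjMatrix_apply, Matrix.of_apply]
  push_cast
  split_ifs <;> simp

lemma stev_charpoly_coeff_cast (G : SimpleGraph V) [DecidableRel G.Adj] (j : ℕ) :
    (((G.lapMatrix ℤ).charpoly.coeff j : ℤ) : ℝ) = (G.lapMatrix ℝ).charpoly.coeff j := by
  rw [← stev_lapMatrix_map_cast G]
  rw [show ((G.lapMatrix ℤ).map (Int.cast : ℤ → ℝ)) = (G.lapMatrix ℤ).map (Int.castRingHom ℝ)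
    from rfl]
  rw [Matrix.charpoly_map, Polynomial.coeff_map]
  simp

omit [DecidableEq V] in
lemma stev_prod_X_sub_C_coeff_finset (μ : V → ℝ) {k : ℕ} (hk : k ≤ Fintype.card V) :
    (∏ i, (X - C (μ i))).coeff (Fintype.card V - k) =
      (-1) ^ k * ∑ A ∈ Finset.powersetCard k Finset.univ, ∏ i ∈ A, μ i := by
  classical
  have hcard : Multiset.card (Finset.univ.val.map μ) = Fintype.card V := by simp
  have h := Multiset.prod_X_sub_C_coeff (s := Finset.univ.val.map μ)
    (k := Fintype.card V - k) (by rw [hcard]; omega)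
  rw [hcard] at h
  have hn : Fintype.card V - (Fintype.card V - k) = k := by omega
  rw [hn] at h
  have hprod : (∏ i, (X - C (μ i))) = ((Finset.univ.val.map μ).map fun t => X - C t).prod := by
    rw [Multiset.map_map]
    rfl
  rw [hprod, h, Finset.esymm_map_val]

omit [DecidableEq V] in
lemma stev_prod_add_esymm (μ : V → ℝ) (x : ℝ) :
    ∏ i, (x + μ i) = ∑ k ∈ Finset.range (Fintype.card V + 1),
      (∑ A ∈ Finset.powersetCard k Finset.univ, ∏ i ∈ A, μ i) * x ^ (Fintype.card V - k) := by
  classical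
  have h1 : ∏ i, (x + μ i) = ∏ i, (μ i + x) :=
    Finset.prod_congr rfl fun i _ => add_comm _ _
  rw [h1, Finset.prod_add]
  rw [Finset.powerset_card_disjiUnion]; erw [Finset.sum_disjiUnion]
  refine Finset.sum_congr (by simp) fun k hk => ?_
  rw [Finset.sum_mul]
  refine Finset.sum_congr rfl fun A hA => ?_
  rw [Finset.mem_powersetCard] at hA
  rw [Finset.prod_const, Finset.card_sdiff_of_subset (Finset.subset_univ A)]
  rw [hA.2]
  rfl

end Algebra

/-- The `k`-th Laplacian coefficient `c_k(G)`, defined by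
`det(λI - L(G)) = ∑_{k=0}^n (-1)^k c_k(G) λ^{n-k}`. -/
noncomputable def lapCoeff {V : Type*} [Fintype V] [DecidableEq V]
    (G : SimpleGraph V) [DecidableRel G.Adj] (k : ℕ) : ℤ :=
  (-1) ^ k * ((G.lapMatrix ℤ).charpoly.coeff (Fintype.card V - k))

/-- The Laplacian-like energy `LEL(G) = ∑_k √(μ_k)`, the sum of the square roots of the
Laplacian eigenvalues of `G` (the eigenvalue `μ_n = 0` contributes `0`). -/
noncomputable def LEL {V : Type*} [Fintype V] [DecidableEq V]
    (G : SimpleGraph V) [DecidableRel G.Adj] : ℝ :=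
  ∑ i, Real.sqrt ((SimpleGraph.posSemidef_lapMatrix ℝ G).1.eigenvalues i)

lemma lapCoeff_cast {V : Type*} [Fintype V] [DecidableEq V]
    (G : SimpleGraph V) [DecidableRel G.Adj] {k : ℕ} (hk : k ≤ Fintype.card V) :
    ((lapCoeff G k : ℤ) : ℝ) = ∑ A ∈ Finset.powersetCard k Finset.univ,
      ∏ i ∈ A, (SimpleGraph.posSemidef_lapMatrix ℝ G).1.eigenvalues i := by
  unfold lapCoeff
  push_cast
  rw [stev_charpoly_coeff_cast,
    stev_charpoly_hermitian_eq _ (SimpleGraph.posSemidef_lapMatrix ℝ G).1,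
    stev_prod_X_sub_C_coeff_finset _ hk, ← mul_assoc, ← mul_pow]
  norm_num

/-- **Stevanović**: if `c_k(G) ≤ c_k(H)` for all `0 ≤ k ≤ n` then `LEL(G) ≤ LEL(H)`,
and if moreover some inequality is strict then `LEL(G) < LEL(H)`. -/
theorem LEL_le_of_lapCoeff_le {V : Type*} [Fintype V] [DecidableEq V]
    (G H : SimpleGraph V) [DecidableRel G.Adj] [DecidableRel H.Adj]
    (h : ∀ k ≤ Fintype.card V, lapCoeff G k ≤ lapCoeff H k) :
    LEL G ≤ LEL H ∧
      ((∃ k ≤ Fintype.card V, lapCoeff G k < lapCoeff H k) → LEL G < LEL H) := by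
  classical
  open MeasureTheory Set Finset in
  set n := Fintype.card V with hn
  set μG := (SimpleGraph.posSemidef_lapMatrix ℝ G).1.eigenvalues with hμGdef
  set μH := (SimpleGraph.posSemidef_lapMatrix ℝ H).1.eigenvalues with hμHdef
  have hμGnn : ∀ i, 0 ≤ μG i := fun i =>
    (SimpleGraph.posSemidef_lapMatrix ℝ G).eigenvalues_nonneg i
  have hμHnn : ∀ i, 0 ≤ μH i := fun i =>
    (SimpleGraph.posSemidef_lapMatrix ℝ H).eigenvalues_nonneg i
  set eG : ℕ → ℝ := fun k => ∑ A ∈ Finset.powersetCard k Finset.univ, ∏ i ∈ A, μG i with heG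
  set eH : ℕ → ℝ := fun k => ∑ A ∈ Finset.powersetCard k Finset.univ, ∏ i ∈ A, μH i with heH
  have hcastG : ∀ k ≤ n, ((lapCoeff G k : ℤ) : ℝ) = eG k := fun k hk => lapCoeff_cast G hk
  have hcastH : ∀ k ≤ n, ((lapCoeff H k : ℤ) : ℝ) = eH k := fun k hk => lapCoeff_cast H hk
  have hee : ∀ k ∈ Finset.range (n+1), eG k ≤ eH k := by
    intro k hk
    have hk' : k ≤ n := Nat.lt_succ_iff.mp (Finset.mem_range.mp hk)
    have h1 : ((lapCoeff G k : ℤ) : ℝ) ≤ ((lapCoeff H k : ℤ) : ℝ) :=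
      Int.cast_le.mpr (h k hk')
    rwa [hcastG k hk', hcastH k hk'] at h1
  set fG : ℝ → ℝ := fun t => ∑ i, (Real.log (t^2 + μG i) - 2 * Real.log t) with hfGdef
  set fH : ℝ → ℝ := fun t => ∑ i, (Real.log (t^2 + μH i) - 2 * Real.log t) with hfHdef
  have hIG : IntegrableOn fG (Set.Ioi 0) volume :=
    integrable_finset_sum _ (fun i _ => (stev_key_integral (μG i) (hμGnn i)).1)
  have hIH : IntegrableOn fH (Set.Ioi 0) volume :=
    integrable_finset_sum _ (fun i _ => (stev_key_integral (μH i) (hμHnn i)).1)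
  have hintG : ∫ t in Set.Ioi (0:ℝ), fG t = Real.pi * LEL G := by
    rw [hfGdef, MeasureTheory.integral_finset_sum _
      (fun i _ => (stev_key_integral (μG i) (hμGnn i)).1), LEL, Finset.mul_sum]
    exact Finset.sum_congr rfl fun i _ => (stev_key_integral (μG i) (hμGnn i)).2
  have hintH : ∫ t in Set.Ioi (0:ℝ), fH t = Real.pi * LEL H := by
    rw [hfHdef, MeasureTheory.integral_finset_sum _
      (fun i _ => (stev_key_integral (μH i) (hμHnn i)).1), LEL, Finset.mul_sum]
    exact Finset.sum_congr rfl fun i _ => (stev_key_integral (μH i) (hμHnn i)).2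
  -- pointwise formulas
  have hprodG : ∀ t : ℝ, 0 < t → ∏ i, (t^2 + μG i) =
      ∑ k ∈ Finset.range (n+1), eG k * (t^2)^(n-k) := fun t _ => stev_prod_add_esymm μG (t^2)
  have hprodH : ∀ t : ℝ, 0 < t → ∏ i, (t^2 + μH i) =
      ∑ k ∈ Finset.range (n+1), eH k * (t^2)^(n-k) := fun t _ => stev_prod_add_esymm μH (t^2)
  have hSGpos : ∀ t : ℝ, 0 < t → 0 < ∑ k ∈ Finset.range (n+1), eG k * (t^2)^(n-k) := by
    intro t ht
    rw [← hprodG t ht]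
    exact Finset.prod_pos fun i _ => by have := hμGnn i; positivity
  have hSHpos : ∀ t : ℝ, 0 < t → 0 < ∑ k ∈ Finset.range (n+1), eH k * (t^2)^(n-k) := by
    intro t ht
    rw [← hprodH t ht]
    exact Finset.prod_pos fun i _ => by have := hμHnn i; positivity
  have hfGlog : ∀ t : ℝ, 0 < t → fG t =
      Real.log (∑ k ∈ Finset.range (n+1), eG k * (t^2)^(n-k)) - (n:ℝ) * (2 * Real.log t) := by
    intro t ht
    have hpos : ∀ i : V, t^2 + μG i ≠ 0 := fun i => by have := hμGnn i; positivity
    rw [hfGdef]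
    simp only [Finset.sum_sub_distrib, Finset.sum_const, Finset.card_univ, nsmul_eq_mul]
    rw [← Real.log_prod (fun i _ => hpos i), hprodG t ht]
  have hfHlog : ∀ t : ℝ, 0 < t → fH t =
      Real.log (∑ k ∈ Finset.range (n+1), eH k * (t^2)^(n-k)) - (n:ℝ) * (2 * Real.log t) := by
    intro t ht
    have hpos : ∀ i : V, t^2 + μH i ≠ 0 := fun i => by have := hμHnn i; positivity
    rw [hfHdef]
    simp only [Finset.sum_sub_distrib, Finset.sum_const, Finset.card_univ, nsmul_eq_mul]
    rw [← Real.log_prod (fun i _ => hpos i), hprodH t ht]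
  have hle : ∀ t ∈ Set.Ioi (0:ℝ), fG t ≤ fH t := by
    intro t ht
    rw [Set.mem_Ioi] at ht
    rw [hfGlog t ht, hfHlog t ht]
    have hsum : ∑ k ∈ Finset.range (n+1), eG k * (t^2)^(n-k) ≤
        ∑ k ∈ Finset.range (n+1), eH k * (t^2)^(n-k) :=
      Finset.sum_le_sum fun k hk =>
        mul_le_mul_of_nonneg_right (hee k hk) (by positivity)
    have := Real.log_le_log (hSGpos t ht) hsum
    linarith
  have hmain : LEL G ≤ LEL H := by
    have hIle : ∫ t in Set.Ioi (0:ℝ), fG t ≤ ∫ t in Set.Ioi (0:ℝ), fH t :=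
      MeasureTheory.setIntegral_mono_on hIG hIH measurableSet_Ioi hle
    rw [hintG, hintH] at hIle
    exact le_of_mul_le_mul_left hIle Real.pi_pos
  refine ⟨hmain, ?_⟩
  rintro ⟨k0, hk0n, hk0⟩
  have hk0' : eG k0 < eH k0 := by
    have h1 : ((lapCoeff G k0 : ℤ) : ℝ) < ((lapCoeff H k0 : ℤ) : ℝ) := Int.cast_lt.mpr hk0
    rwa [hcastG k0 hk0n, hcastH k0 hk0n] at h1
  have hlt : ∀ t ∈ Set.Ioi (0:ℝ), fG t < fH t := by
    intro t ht
    rw [Set.mem_Ioi] at ht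
    rw [hfGlog t ht, hfHlog t ht]
    have hsum : ∑ k ∈ Finset.range (n+1), eG k * (t^2)^(n-k) <
        ∑ k ∈ Finset.range (n+1), eH k * (t^2)^(n-k) := by
      refine Finset.sum_lt_sum
        (fun k hk => mul_le_mul_of_nonneg_right (hee k hk) (by positivity)) ?_
      refine ⟨k0, Finset.mem_range.mpr (Nat.lt_succ_of_le hk0n), ?_⟩
      exact mul_lt_mul_of_pos_right hk0' (by positivity)
    have := Real.log_lt_log (hSGpos t ht) hsum
    linarith
  have hsubI : IntegrableOn (fun t => fH t - fG t) (Set.Ioi 0) volume := hIH.sub hIG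
  have hpos : 0 < ∫ t in Set.Ioi (0:ℝ), (fH t - fG t) := by
    rw [MeasureTheory.setIntegral_pos_iff_support_of_nonneg_ae ?_ hsubI]
    · have hsup : Set.Ioi (0:ℝ) ⊆ Function.support (fun t => fH t - fG t) :=
        fun t ht => (sub_pos.mpr (hlt t ht)).ne'
      calc (0:ENNReal) < volume (Set.Ioi (0:ℝ)) := by simp [Real.volume_Ioi]
        _ ≤ volume (Function.support (fun t => fH t - fG t) ∩ Set.Ioi 0) :=
          measure_mono (Set.subset_inter hsup subset_rfl)
    · filter_upwards [MeasureTheory.ae_restrict_mem measurableSet_Ioi] with t ht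
      exact sub_nonneg.mpr (hle t ht)
  rw [MeasureTheory.integral_sub hIH hIG] at hpos
  have hfin : Real.pi * LEL G < Real.pi * LEL H := by
    rw [← hintG, ← hintH]; linarith
  exact lt_of_mul_lt_mul_left hfin Real.pi_pos.le
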